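/- For even N > 2 and 1 ≤ k ≤ N/2, measuring one qubit of the Dicke state |D_k^N⟩ in the computational basis gives an average GGM of the post-measurement (N−1)-qubit Dicke states equal to (N−2)/(2(N−1)) when k = N/2, and k/N when k < N/2; hence in both cases the average equals the GGM of the original Dicke state. -/

import Mathlib

open scoped BigOperators

noncomputable section

namespace QI

/-- A pure state of a collection of qubits indexed by `ι`, given by its
amplitudes in the computational basis. -/
abbrev PureState (ι : Type) := (ι → Fin 2) → ℂ

variable {ι : Type} [Fintype ι] [DecidableEq ι]

/-- Squared norm of a pure state. -/
def nsq (ψ : PureState ι) : ℝ := ∑ x, Complex.normSq (ψ x)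

/-- Normalization of a pure state. -/
def normalize (ψ : PureState ι) : PureState ι :=
  fun x => ψ x / (Real.sqrt (nsq ψ) : ℂ)

/-- Combine configurations of the qubits in `A` and outside `A`. -/
def merge (A : Finset ι) (a : {i // i ∈ A} → Fin 2) (b : {i // i ∉ A} → Fin 2) :
    ι → Fin 2 := fun i => if h : i ∈ A then a ⟨i, h⟩ else b ⟨i, h⟩

/-- Reduced density matrix of the qubits in `A`. -/
def rdm (ψ : PureState ι) (A : Finset ι) :
    ({i // i ∈ A} → Fin 2) → ({i // i ∈ A} → Fin 2) → ℂ :=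
  fun a a' => ∑ b : {i // i ∉ A} → Fin 2, ψ (merge A a b) * star (ψ (merge A a' b))

/-- Maximal eigenvalue of a (Hermitian) matrix, via the Rayleigh quotient. -/
def maxEig {κ : Type} [Fintype κ] (ρ : κ → κ → ℂ) : ℝ :=
  ⨆ v : {v : κ → ℂ // ∑ i, Complex.normSq (v i) = 1},
    (∑ i, ∑ j, star (v.1 i) * ρ i j * v.1 j).re

/-- The generalized geometric measure: one minus the maximal squared Schmidt
coefficient over all nonempty proper bipartitions. -/
def GGM (ψ : PureState ι) : ℝ :=
  1 - ⨆ A : {A : Finset ι // A.Nonempty ∧ A ≠ Finset.univ}, maxEig (rdm ψ A.1)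

/-- Unnormalized post-measurement state on the remaining qubits after obtaining
the outcome corresponding to the basis vector `ξ` in a rank-1 projective
measurement on qubit `r`. -/
def collapse (ψ : PureState ι) (r : ι) (ξ : Fin 2 → ℂ) :
    PureState {i // i ≠ r} :=
  fun b => ∑ v : Fin 2, ξ v * ψ (fun i => if h : i = r then v else b ⟨i, h⟩)

/-- First measurement-basis vector `cos(θ/2)|0⟩ + e^{iφ} sin(θ/2)|1⟩`. -/
def xiUp (θ φ : ℝ) : Fin 2 → ℂ :=
  ![(Real.cos (θ/2) : ℂ), Complex.exp (φ * Complex.I) * (Real.sin (θ/2) : ℂ)]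

/-- Second measurement-basis vector `-e^{-iφ} sin(θ/2)|0⟩ + cos(θ/2)|1⟩`. -/
def xiDn (θ φ : ℝ) : Fin 2 → ℂ :=
  ![-(Complex.exp (-(φ * Complex.I))) * (Real.sin (θ/2) : ℂ), (Real.cos (θ/2) : ℂ)]

/-- Average post-measurement GGM for the projective measurement `(θ, φ)` on
qubit `r`. -/
def avgGGM (ψ : PureState ι) (r : ι) (θ φ : ℝ) : ℝ :=
  nsq (collapse ψ r (xiUp θ φ)) * GGM (normalize (collapse ψ r (xiUp θ φ))) +
  nsq (collapse ψ r (xiDn θ φ)) * GGM (normalize (collapse ψ r (xiDn θ φ)))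

/-- The localizable generalized geometric measure for single-qubit projective
measurement on qubit `r`. -/
def LGGM (ψ : PureState ι) (r : ι) : ℝ :=
  sSup {E | ∃ θ ∈ Set.Icc 0 Real.pi, ∃ φ ∈ Set.Ico 0 (2 * Real.pi),
    E = avgGGM ψ r θ φ}

/-- The generalized GHZ state `a₁|0…0⟩ + a₂|1…1⟩`. -/
def ghz (a1 a2 : ℂ) : PureState ι :=
  fun x => if x = fun _ => 0 then a1 else if x = fun _ => 1 then a2 else 0

/-- Computational basis vector with a single `1` at position `i`. -/
def basisVec (i : ι) : ι → Fin 2 := fun j => if j = i then 1 else 0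

/-- The generalized W state `Σᵢ aᵢ |0…1ᵢ…0⟩`. -/
def wState (a : ι → ℂ) : PureState ι :=
  fun x => ∑ i, if x = basisVec i then a i else 0

/-- The Dicke state with `k` excitations: equal superposition of all
computational basis states with exactly `k` ones. -/
def dicke (k : ℕ) : PureState ι :=
  fun x => if (∑ i, ((x i : ℕ))) = k
    then ((1 / Real.sqrt ((Fintype.card ι).choose k) : ℝ) : ℂ) else 0


lemma choose_id (n : ℕ) :
    (2*n+2).choose (n+1) * ((n+1)*(n+1)) = (2*n).choose n * ((2*n+2)*(2*n+1)) := by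
  have h1 := Nat.add_one_mul_choose_eq (2*n+1) n
  have h2 := Nat.add_one_mul_choose_eq (2*n) n
  have h3 : (2*n+1).choose n = (2*n+1).choose (n+1) := by
    have := Nat.choose_symm (n := 2*n+1) (k := n+1) (by omega)
    simpa [show 2*n+1-(n+1) = n by omega] using this
  rw [h3] at h1
  nlinarith [h1, h2]

lemma choose_mono_mid {n r : ℕ} (h : 2*r+1 ≤ n) : n.choose r ≤ n.choose (r+1) := by
  rcases eq_or_lt_of_le h with he | hlt
  · have hs : n - (r+1) = r := by omega
    have h2 := Nat.choose_symm (n:=n) (k:=r+1) (by omega : r+1 ≤ n)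
    rw [hs] at h2
    exact h2.le
  · exact Nat.choose_le_succ_of_lt_half_left (by omega)

/-- Core: product of central binomials. -/
lemma core (l s : ℕ) :
    (2*l+2).choose (l+1) * ((2*s+2).choose (s+1)) ≤ 2 * ((2*(l+s)+2).choose (l+s+1)) := by
  induction s with
  | zero => simp [Nat.mul_comm]
  | succ s ih =>
    set a := (2*l+2).choose (l+1) with ha
    set b := (2*s+2).choose (s+1) with hb
    set b' := (2*(s+1)+2).choose (s+1+1) with hb'
    set c := (2*(l+s)+2).choose (l+s+1) with hc
    set c' := (2*(l+(s+1))+2).choose (l+(s+1)+1) with hc'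
    have id1 : b' * ((s+2)*(s+2)) = b * ((2*s+4)*(2*s+3)) := by
      have := choose_id (s+1)
      rw [hb', hb, show 2*s+2 = 2*(s+1) by ring, show s+2 = s+1+1 by ring,
        show 2*s+4 = 2*(s+1)+2 by ring, show 2*s+3 = 2*(s+1)+1 by ring]
      exact this
    have id2 : c' * ((l+s+2)*(l+s+2)) = c * ((2*(l+s)+4)*(2*(l+s)+3)) := by
      have := choose_id (l+s+1)
      have e1 : 2*(l+(s+1))+2 = 2*(l+s+1)+2 := by ring
      have e2 : l+(s+1)+1 = (l+s+1)+1 := by ring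
      rw [hc', e1, e2, this, hc]
      ring_nf
    have key : (2*s+3)*(l+s+2) ≤ (2*(l+s)+3)*(s+2) := by nlinarith
    have step : a * b' * ((s+2)*(s+2)*((l+s+2)*(l+s+2)))
        ≤ 2 * c' * ((s+2)*(s+2)*((l+s+2)*(l+s+2))) := by
      have m1 : a * b * ((2*s+4)*(2*s+3)) * ((l+s+2)*(l+s+2))
          ≤ 2 * c * ((2*s+4)*(2*s+3)) * ((l+s+2)*(l+s+2)) := by
        exact Nat.mul_le_mul_right _ (Nat.mul_le_mul_right _ ih)
      have m2 : (4*c*(s+2)*(l+s+2)) * ((2*s+3)*(l+s+2))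
          ≤ (4*c*(s+2)*(l+s+2)) * ((2*(l+s)+3)*(s+2)) := Nat.mul_le_mul_left _ key
      calc a * b' * ((s+2)*(s+2)*((l+s+2)*(l+s+2)))
          = a * b * ((2*s+4)*(2*s+3)) * ((l+s+2)*(l+s+2)) := by
            rw [show a * b' * ((s+2)*(s+2)*((l+s+2)*(l+s+2)))
              = a * (b' * ((s+2)*(s+2))) * ((l+s+2)*(l+s+2)) by ring, id1]; ring
        _ ≤ 2 * c * ((2*s+4)*(2*s+3)) * ((l+s+2)*(l+s+2)) := m1
        _ = (4*c*(s+2)*(l+s+2)) * ((2*s+3)*(l+s+2)) := by ring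
        _ ≤ (4*c*(s+2)*(l+s+2)) * ((2*(l+s)+3)*(s+2)) := m2
        _ = 2 * (c * ((2*(l+s)+4)*(2*(l+s)+3))) * ((s+2)*(s+2)) := by ring
        _ = 2 * (c' * ((l+s+2)*(l+s+2))) * ((s+2)*(s+2)) := by rw [id2]
        _ = 2 * c' * ((s+2)*(s+2)*((l+s+2)*(l+s+2))) := by ring
    exact Nat.le_of_mul_le_mul_right step (by positivity)

lemma two_terms {m n k : ℕ} (p q : ℕ × ℕ) (hp : p.1 + p.2 = k) (hq : q.1 + q.2 = k)
    (hne : p ≠ q) :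
    m.choose p.1 * n.choose p.2 + m.choose q.1 * n.choose q.2 ≤ (m+n).choose k := by
  rw [Nat.add_choose_eq]
  have hsub : ({p, q} : Finset (ℕ × ℕ)) ⊆ Finset.HasAntidiagonal.antidiagonal k := by
    intro x hx
    simp only [Finset.mem_insert, Finset.mem_singleton] at hx
    rcases hx with rfl | rfl <;> simp [Finset.HasAntidiagonal.mem_antidiagonal, hp, hq]
  calc m.choose p.1 * n.choose p.2 + m.choose q.1 * n.choose q.2
      = ∑ x ∈ ({p, q} : Finset (ℕ × ℕ)), m.choose x.1 * n.choose x.2 :=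
        (Finset.sum_pair (f := fun x => m.choose x.1 * n.choose x.2) hne).symm
    _ ≤ ∑ ij ∈ Finset.HasAntidiagonal.antidiagonal k, m.choose ij.1 * n.choose ij.2 :=
        Finset.sum_le_sum_of_subset_of_nonneg hsub (fun _ _ _ => Nat.zero_le _)

lemma B0 {m mB l w : ℕ} (hm : 1 ≤ m) (hmB : 1 ≤ mB)
    (hsplit : 2*w+1 ≤ mB ∨ 2*l+1 ≤ m) :
    m.choose l * mB.choose w ≤ (m+mB-1).choose (l+w) := by
  by_cases hl : l ≤ m; swap
  · simp [Nat.choose_eq_zero_of_lt (by omega : m < l)]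
  by_cases hw : w ≤ mB; swap
  · simp [Nat.choose_eq_zero_of_lt (by omega : mB < w)]
  rcases Nat.eq_zero_or_pos l with rfl | hl1
  · simpa using Nat.choose_le_choose w (by omega : mB ≤ m+mB-1)
  rcases Nat.eq_zero_or_pos w with rfl | hw1
  · simpa using Nat.choose_le_choose l (by omega : m ≤ m+mB-1)
  rcases hsplit with hc | hc
  · -- split on first factor
    obtain ⟨m1, rfl⟩ : ∃ m1, m = m1 + 1 := ⟨m-1, by omega⟩
    obtain ⟨l1, rfl⟩ : ∃ l1, l = l1 + 1 := ⟨l-1, by omega⟩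
    have pas : (m1+1).choose (l1+1) = m1.choose l1 + m1.choose (l1+1) :=
      Nat.choose_succ_succ m1 l1
    have mono : mB.choose w ≤ mB.choose (w+1) := choose_mono_mid hc
    have : (m1+1).choose (l1+1) * mB.choose w
        ≤ m1.choose (l1+1) * mB.choose w + m1.choose l1 * mB.choose (w+1) := by
      rw [pas, Nat.add_mul, Nat.add_comm]
      exact Nat.add_le_add_left (Nat.mul_le_mul (Nat.le_refl _) mono) _
    refine this.trans ?_
    have h2 := two_terms (m := m1) (n := mB) (k := l1+1+w) (l1+1, w) (l1, w+1) (by omega) (by omega)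
      (by simp)
    simpa [show m1+1+mB-1 = m1+mB by omega] using h2
  · -- split on second factor
    obtain ⟨mB1, rfl⟩ : ∃ m1, mB = m1 + 1 := ⟨mB-1, by omega⟩
    obtain ⟨w1, rfl⟩ : ∃ w1, w = w1 + 1 := ⟨w-1, by omega⟩
    have pas : (mB1+1).choose (w1+1) = mB1.choose w1 + mB1.choose (w1+1) :=
      Nat.choose_succ_succ mB1 w1
    have mono : m.choose l ≤ m.choose (l+1) := choose_mono_mid hc
    have : m.choose l * (mB1+1).choose (w1+1)
        ≤ m.choose (l+1) * mB1.choose w1 + m.choose l * mB1.choose (w1+1) := by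
      rw [pas, Nat.mul_add]
      exact Nat.add_le_add_right (Nat.mul_le_mul mono (Nat.le_refl _)) _
    refine this.trans ?_
    have h2 := two_terms (m := m) (n := mB1) (k := l+1+w1) (l+1, w1) (l, w1+1) (by omega) (by omega)
      (by simp)
    simpa [show m+(mB1+1)-1 = m+mB1 by omega, show l+1+w1 = l+(w1+1) by omega] using h2

lemma B1 {m mB l w : ℕ} (hm : 1 ≤ m) (hmB : 1 ≤ mB) (hj : 2*(l+w) < m+mB) :
    m.choose l * mB.choose w ≤ (m+mB-1).choose (l+w) :=
  B0 hm hmB (by omega)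

lemma two_central (w : ℕ) (hw : 1 ≤ w) : 2 * ((2*w-1).choose w) = (2*w).choose w := by
  obtain ⟨w1, rfl⟩ : ∃ w1, w = w1 + 1 := ⟨w-1, by omega⟩
  have pas : (2*w1+1+1).choose (w1+1) = (2*w1+1).choose w1 + (2*w1+1).choose (w1+1) :=
    Nat.choose_succ_succ (2*w1+1) w1
  have sym := Nat.choose_symm (n := 2*w1+1) (k := w1+1) (by omega)
  rw [show 2*w1+1-(w1+1) = w1 by omega] at sym
  have e : 2*(w1+1) = 2*w1+1+1 := by omega
  rw [show 2*(w1+1)-1 = 2*w1+1 by omega, e, pas, sym]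
  omega

lemma B2 {m mB l w : ℕ} (hm : 1 ≤ m) (hmB : 1 ≤ mB) (hj : 2*(l+w) = m+mB) :
    m.choose l * mB.choose w ≤ 2 * ((m+mB-2).choose (l+w-1)) := by
  by_cases hl : l ≤ m; swap
  · simp [Nat.choose_eq_zero_of_lt (by omega : m < l)]
  by_cases hw : w ≤ mB; swap
  · simp [Nat.choose_eq_zero_of_lt (by omega : mB < w)]
  by_cases hsplit : 2*w+1 ≤ mB ∨ 2*l+1 ≤ m
  · have h1 := B0 hm hmB hsplit
    refine h1.trans ?_
    -- C(2j-1, j) ≤ 2*C(2j-2, j-1)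
    have hj1 : 1 ≤ l + w := by omega
    obtain ⟨j1, hjj⟩ : ∃ j1, l + w = j1 + 1 := ⟨l+w-1, by omega⟩
    rw [hjj, show m+mB-1 = 2*j1+1 by omega, show m+mB-2 = 2*j1 by omega,
      show j1+1-1 = j1 by omega]
    have pas : (2*j1+1).choose (j1+1) = (2*j1).choose j1 + (2*j1).choose (j1+1) :=
      Nat.choose_succ_succ (2*j1) j1
    have mid : (2*j1).choose (j1+1) ≤ (2*j1).choose j1 := by
      have := Nat.choose_le_middle (j1+1) (2*j1)
      simpa [show 2*j1/2 = j1 by omega] using this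
    omega
  · push_neg at hsplit
    have h2l : 2*l = m := by omega
    have h2w : 2*w = mB := by omega
    have hl1 : 1 ≤ l := by omega
    have hw1 : 1 ≤ w := by omega
    obtain ⟨l1, rfl⟩ : ∃ l1, l = l1 + 1 := ⟨l-1, by omega⟩
    obtain ⟨w1, rfl⟩ : ∃ w1, w = w1 + 1 := ⟨w-1, by omega⟩
    have hcore := core l1 w1
    rw [← h2l, ← h2w]
    calc (2*(l1+1)).choose (l1+1) * (2*(w1+1)).choose (w1+1)
        = (2*l1+2).choose (l1+1) * (2*w1+2).choose (w1+1) := by ring_nf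
      _ ≤ 2 * ((2*(l1+w1)+2).choose (l1+w1+1)) := hcore
      _ = 2 * ((2*(l1+1)+2*(w1+1)-2).choose (l1+1+(w1+1)-1)) := by
          congr 1
          congr 1 <;> omega

lemma B3 {m mB l w : ℕ} (hm : 1 ≤ m) (hmB : 1 ≤ mB) (hj : 2*(l+w) = m+mB+1) :
    m.choose l * mB.choose w ≤ (m+mB-1).choose (l+w-1) := by
  by_cases hl : l ≤ m; swap
  · simp [Nat.choose_eq_zero_of_lt (by omega : m < l)]
  by_cases hw : w ≤ mB; swap
  · simp [Nat.choose_eq_zero_of_lt (by omega : mB < w)]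
  have hj1 : 1 ≤ l + w := by omega
  obtain ⟨j1, hjj⟩ : ∃ j1, l + w = j1 + 1 := ⟨l+w-1, by omega⟩
  by_cases hsplit : 2*w+1 ≤ mB ∨ 2*l+1 ≤ m
  · have h1 := B0 hm hmB hsplit
    refine h1.trans ?_
    rw [hjj, show m+mB-1 = 2*j1 by omega, show j1+1-1 = j1 by omega]
    have := Nat.choose_le_middle (j1+1) (2*j1)
    simpa [show 2*j1/2 = j1 by omega] using this
  · push_neg at hsplit
    have hbad : (2*l = m+1 ∧ 2*w = mB) ∨ (2*l = m ∧ 2*w = mB+1) := by omega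
    have target_eq : m+mB-1 = 2*(l+w)-2 := by omega
    rw [target_eq, hjj, show j1+1-1 = j1 by omega, show 2*(j1+1)-2 = 2*j1 by omega]
    rcases hbad with ⟨h1, h2⟩ | ⟨h1, h2⟩
    · -- m = 2l-1, mB = 2w
      have hl1 : 1 ≤ l := by omega
      have hw1 : 1 ≤ w := by omega
      obtain ⟨l1, rfl⟩ : ∃ l1, l = l1 + 1 := ⟨l-1, by omega⟩
      obtain ⟨w1, rfl⟩ : ∃ w1, w = w1 + 1 := ⟨w-1, by omega⟩
      have htc := two_central (l1+1) (by omega)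
      have hcore := core l1 w1
      have key : 2 * (m.choose (l1+1) * mB.choose (w1+1)) ≤ 2 * ((2*j1).choose j1) := by
        have em : m = 2*(l1+1)-1 := by omega
        have emB : mB = 2*(w1+1) := by omega
        rw [em, emB]
        calc 2 * ((2*(l1+1)-1).choose (l1+1) * (2*(w1+1)).choose (w1+1))
            = (2 * ((2*(l1+1)-1).choose (l1+1))) * ((2*(w1+1)).choose (w1+1)) := by ring
          _ = (2*(l1+1)).choose (l1+1) * (2*(w1+1)).choose (w1+1) := by rw [htc]
          _ = (2*l1+2).choose (l1+1) * (2*w1+2).choose (w1+1) := by ring_nf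
          _ ≤ 2 * ((2*(l1+w1)+2).choose (l1+w1+1)) := hcore
          _ = 2 * ((2*j1).choose j1) := by
              congr 2 <;> omega
      omega
    · -- m = 2l, mB = 2w-1
      have hl1 : 1 ≤ l := by omega
      have hw1 : 1 ≤ w := by omega
      obtain ⟨l1, rfl⟩ : ∃ l1, l = l1 + 1 := ⟨l-1, by omega⟩
      obtain ⟨w1, rfl⟩ : ∃ w1, w = w1 + 1 := ⟨w-1, by omega⟩
      have htc := two_central (w1+1) (by omega)
      have hcore := core l1 w1
      have key : 2 * (m.choose (l1+1) * mB.choose (w1+1)) ≤ 2 * ((2*j1).choose j1) := by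
        have em : m = 2*(l1+1) := by omega
        have emB : mB = 2*(w1+1)-1 := by omega
        rw [em, emB]
        calc 2 * ((2*(l1+1)).choose (l1+1) * ((2*(w1+1)-1).choose (w1+1)))
            = (2*(l1+1)).choose (l1+1) * (2 * ((2*(w1+1)-1).choose (w1+1))) := by ring
          _ = (2*(l1+1)).choose (l1+1) * (2*(w1+1)).choose (w1+1) := by rw [htc]
          _ = (2*l1+2).choose (l1+1) * (2*w1+2).choose (w1+1) := by ring_nf
          _ ≤ 2 * ((2*(l1+w1)+2).choose (l1+w1+1)) := hcore
          _ = 2 * ((2*j1).choose j1) := by congr 2 <;> omega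
      omega

def vnum (M j : ℕ) : ℕ :=
  if 2*j = M then 2*((M-2).choose (j-1))
  else if 2*j = M+1 then (M-1).choose (j-1)
  else (M-1).choose j

lemma keyB {M j : ℕ} (h3 : 3 ≤ M) (hj : 2*j ≤ M+1) {m : ℕ} (hm1 : 1 ≤ m) (hm2 : m < M)
    (l w : ℕ) (hlw : l + w = j) :
    m.choose l * ((M-m).choose w) ≤ vnum M j := by
  have hmB : 1 ≤ M - m := by omega
  have hMm : m + (M - m) = M := by omega
  unfold vnum
  by_cases h1 : 2*j = M
  · rw [if_pos h1]
    have := B2 hm1 hmB (by omega : 2*(l+w) = m + (M-m))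
    rwa [hMm, hlw] at this
  · rw [if_neg h1]
    by_cases h2 : 2*j = M+1
    · rw [if_pos h2]
      have := B3 hm1 hmB (by omega : 2*(l+w) = m + (M-m) + 1)
      rwa [hMm, hlw] at this
    · rw [if_neg h2]
      have := B1 hm1 hmB (by omega : 2*(l+w) < m + (M-m))
      rwa [hMm, hlw] at this

/-- Hamming weight of a configuration. -/
def wgt {κ : Type} [Fintype κ] (x : κ → Fin 2) : ℕ := ∑ i, (x i : ℕ)

lemma wgt_le_card {κ : Type} [Fintype κ] (x : κ → Fin 2) : wgt x ≤ Fintype.card κ := by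
  unfold wgt
  calc ∑ i, ((x i : ℕ)) ≤ ∑ _i : κ, 1 :=
        Finset.sum_le_sum (fun i _ => by omega)
    _ = Fintype.card κ := by simp

lemma card_wgt (κ : Type) [Fintype κ] [DecidableEq κ] (t : ℕ) :
    (Finset.univ.filter fun x : κ → Fin 2 => wgt x = t).card = (Fintype.card κ).choose t := by
  have key : ∀ x : κ → Fin 2, wgt x = (Finset.univ.filter fun i => x i = 1).card := by
    intro x
    rw [Finset.card_filter]
    have hv : ∀ v : Fin 2, (v : ℕ) = if v = 1 then 1 else 0 := by decide
    exact Finset.sum_congr rfl fun i _ => hv (x i)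
  rw [← Finset.card_univ, ← Finset.card_powersetCard]
  apply Finset.card_bij' (i := fun x _ => Finset.univ.filter fun i => x i = 1)
    (j := fun s _ => fun i => if i ∈ s then 1 else 0)
  case hi =>
    intro x hx
    simp only [Finset.mem_filter, Finset.mem_univ, true_and] at hx
    rw [Finset.mem_powersetCard]
    exact ⟨Finset.filter_subset _ _ |>.trans (by simp), by rw [← key x]; exact hx⟩
  case hj =>
    intro s hs
    simp only [Finset.mem_filter, Finset.mem_univ, true_and]
    rw [Finset.mem_powersetCard] at hs
    rw [key]
    have h5 : (Finset.univ.filter fun i => (if i ∈ s then (1:Fin 2) else 0) = 1) = s := by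
      ext i
      by_cases hi : i ∈ s <;> simp [hi]
    rw [h5]
    exact hs.2
  case left_inv =>
    intro x _
    funext i
    by_cases hi : x i = 1 <;> simp [hi]
    omega
  case right_inv =>
    intro s _
    ext i
    by_cases hi : i ∈ s <;> simp [hi]


lemma wgt_merge (A : Finset ι) (a : {i // i ∈ A} → Fin 2) (b : {i // i ∉ A} → Fin 2) :
    wgt (merge A a b) = wgt a + wgt b := by
  unfold wgt
  rw [← Finset.sum_filter_add_sum_filter_not Finset.univ (fun i => i ∈ A)
    (fun i => ((merge A a b i : ℕ)))]
  congr 1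
  · rw [Finset.sum_subtype (p := fun i => i ∈ A) _ (by simp)]
    exact Finset.sum_congr rfl fun i _ => by simp [merge, i.2]
  · rw [Finset.sum_subtype (p := fun i => ¬ i ∈ A) _ (by simp)]
    exact Finset.sum_congr rfl fun i _ => by simp [merge, i.2]

lemma wgt_ext (r : ι) (v : Fin 2) (b : {i // i ≠ r} → Fin 2) :
    wgt (fun i => if h : i = r then v else b ⟨i, h⟩) = (v : ℕ) + wgt b := by
  unfold wgt
  rw [← Finset.sum_filter_add_sum_filter_not Finset.univ (fun i => i = r)
    (fun i => (((if h : i = r then v else b ⟨i, h⟩) : Fin 2) : ℕ))]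
  congr 1
  · rw [Finset.filter_eq']
    simp
  · rw [Finset.sum_subtype (p := fun i => ¬ i = r) _ (by simp)]
    exact Finset.sum_congr rfl fun i _ => by simp [i.2]

lemma rayleigh (ψ : PureState ι) (A : Finset ι) (v : ({i // i ∈ A} → Fin 2) → ℂ) :
    (∑ a, ∑ a', star (v a) * rdm ψ A a a' * v a').re
      = ∑ b : {i // i ∉ A} → Fin 2,
          Complex.normSq (∑ a, star (v a) * ψ (merge A a b)) := by
  have step : (∑ a, ∑ a', star (v a) * rdm ψ A a a' * v a')
      = ∑ b : {i // i ∉ A} → Fin 2,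
          (∑ a, star (v a) * ψ (merge A a b)) *
            star (∑ a', star (v a') * ψ (merge A a' b)) := by
    unfold rdm
    calc (∑ a, ∑ a', star (v a) *
            (∑ b : {i // i ∉ A} → Fin 2, ψ (merge A a b) * star (ψ (merge A a' b))) * v a')
        = ∑ a, ∑ a', ∑ b : {i // i ∉ A} → Fin 2,
            star (v a) * (ψ (merge A a b) * star (ψ (merge A a' b))) * v a' := by
          refine Finset.sum_congr rfl fun a _ => Finset.sum_congr rfl fun a' _ => ?_
          rw [Finset.mul_sum, Finset.sum_mul]
      _ = ∑ a, ∑ b : {i // i ∉ A} → Fin 2, ∑ a',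
            star (v a) * (ψ (merge A a b) * star (ψ (merge A a' b))) * v a' :=
          Finset.sum_congr rfl fun a _ => Finset.sum_comm
      _ = ∑ b : {i // i ∉ A} → Fin 2, ∑ a, ∑ a',
            star (v a) * (ψ (merge A a b) * star (ψ (merge A a' b))) * v a' :=
          Finset.sum_comm
      _ = ∑ b : {i // i ∉ A} → Fin 2,
            (∑ a, star (v a) * ψ (merge A a b)) *
              star (∑ a', star (v a') * ψ (merge A a' b)) := by
          refine Finset.sum_congr rfl fun b _ => ?_
          rw [star_sum, Finset.sum_mul]
          refine Finset.sum_congr rfl fun a _ => ?_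
          rw [Finset.mul_sum]
          refine Finset.sum_congr rfl fun a' _ => ?_
          simp only [star_mul', star_star]
          ring
  rw [step, Complex.re_sum]
  refine Finset.sum_congr rfl fun b _ => ?_
  have hz : ∀ z : ℂ, (z * star z).re = Complex.normSq z := by
    intro z
    rw [show star z = (starRingEnd ℂ) z from rfl, Complex.mul_conj]
    exact Complex.ofReal_re _
  exact hz _

lemma normSq_sum_le {γ : Type} (s : Finset γ) (f : γ → ℂ) :
    Complex.normSq (∑ a ∈ s, f a) ≤ s.card * ∑ a ∈ s, Complex.normSq (f a) := by
  have h1 : ‖∑ a ∈ s, f a‖ ≤ ∑ a ∈ s, ‖f a‖ := by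
    simpa using norm_sum_le s f
  have h2 : (∑ a ∈ s, ‖f a‖)^2 ≤ (s.card : ℝ) * ∑ a ∈ s, ‖f a‖^2 := by
    have := Finset.sum_mul_sq_le_sq_mul_sq s (fun _ => (1:ℝ)) (fun a => ‖f a‖)
    simpa using this
  calc Complex.normSq (∑ a ∈ s, f a) = ‖∑ a ∈ s, f a‖^2 := (Complex.sq_norm _).symm
    _ ≤ (∑ a ∈ s, ‖f a‖)^2 := by
        apply pow_le_pow_left₀ (by positivity) h1
    _ ≤ (s.card : ℝ) * ∑ a ∈ s, ‖f a‖^2 := h2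
    _ = s.card * ∑ a ∈ s, Complex.normSq (f a) := by
        congr 1
        exact Finset.sum_congr rfl fun a _ => Complex.sq_norm _


lemma amp {j : ℕ} (A : Finset ι) (v : ({i // i ∈ A} → Fin 2) → ℂ)
    (b : {i // i ∉ A} → Fin 2) :
    ∑ a, star (v a) * dicke j (merge A a b)
      = ((1/Real.sqrt (((Fintype.card ι).choose j : ℕ)) : ℝ) : ℂ) *
          ∑ a ∈ Finset.univ.filter (fun a : {i // i ∈ A} → Fin 2 => wgt a + wgt b = j),
            star (v a) := by
  set c : ℂ := ((1/Real.sqrt (((Fintype.card ι).choose j : ℕ)) : ℝ) : ℂ) with hc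
  calc ∑ a, star (v a) * dicke j (merge A a b)
      = ∑ a, (if wgt a + wgt b = j then star (v a) * c else 0) := by
        refine Finset.sum_congr rfl fun a _ => ?_
        have hw : (∑ i, ((merge A a b i : ℕ))) = wgt a + wgt b := wgt_merge A a b
        simp only [dicke, hw]
        rw [mul_ite, mul_zero]
    _ = ∑ a ∈ Finset.univ.filter (fun a : {i // i ∈ A} → Fin 2 => wgt a + wgt b = j),
          star (v a) * c := (Finset.sum_filter _ _).symm
    _ = c * ∑ a ∈ Finset.univ.filter (fun a : {i // i ∈ A} → Fin 2 => wgt a + wgt b = j),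
          star (v a) := by rw [← Finset.sum_mul]; ring

lemma cr_sq {M j : ℕ} (hj : j ≤ M) :
    (1/Real.sqrt ((M.choose j : ℕ)) : ℝ) * (1/Real.sqrt ((M.choose j : ℕ)) : ℝ)
      = 1 / (M.choose j : ℝ) := by
  have h0 : (0:ℝ) ≤ (M.choose j : ℝ) := Nat.cast_nonneg _
  rw [div_mul_div_comm, one_mul, Real.mul_self_sqrt h0]

lemma rayleigh_dicke_le {M j : ℕ} (hM : Fintype.card ι = M) (h3 : 3 ≤ M) (hj : 2*j ≤ M+1)
    (A : Finset ι) (hA1 : A.Nonempty) (hA2 : A ≠ Finset.univ)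
    (v : ({i // i ∈ A} → Fin 2) → ℂ) (hv : ∑ a, Complex.normSq (v a) = 1) :
    (∑ a, ∑ a', star (v a) * rdm (dicke j) A a a' * v a').re
      ≤ (vnum M j : ℝ) / (M.choose j : ℝ) := by
  have hcardA : Fintype.card {i // i ∈ A} = A.card := Fintype.card_coe A
  have hm1 : 1 ≤ A.card := Finset.card_pos.mpr hA1
  have hm2 : A.card < M := by
    have := Finset.card_lt_card (Finset.ssubset_univ_iff.mpr hA2)
    rwa [Finset.card_univ, hM] at this
  have hcardB : Fintype.card {i // i ∉ A} = M - A.card := by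
    rw [Fintype.card_subtype_compl, hM, hcardA]
  set R := M - A.card + 1 with hR
  set T : ℕ → ℂ := fun w =>
    ∑ a ∈ Finset.univ.filter (fun a : {i // i ∈ A} → Fin 2 => wgt a + w = j), star (v a)
    with hT
  set Sg : ℕ → ℝ := fun w =>
    ∑ a ∈ Finset.univ.filter (fun a : {i // i ∈ A} → Fin 2 => wgt a + w = j),
      Complex.normSq (v a) with hSg
  set cr : ℝ := (1/Real.sqrt ((M.choose j : ℕ)) : ℝ) with hcr
  rw [rayleigh]
  have step1 : ∑ b : {i // i ∉ A} → Fin 2,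
        Complex.normSq (∑ a, star (v a) * dicke j (merge A a b))
      = (cr*cr) * ∑ b : {i // i ∉ A} → Fin 2, Complex.normSq (T (wgt b)) := by
    rw [Finset.mul_sum]
    refine Finset.sum_congr rfl fun b _ => ?_
    rw [amp A v b, Complex.normSq_mul, Complex.normSq_ofReal, hM]
  rw [step1]
  -- group by weight of b
  have hmap : ∀ b : {i // i ∉ A} → Fin 2, b ∈ (Finset.univ : Finset _) →
      wgt b ∈ Finset.range R := by
    intro b _
    have h := wgt_le_card b
    rw [hcardB] at h
    exact Finset.mem_range.mpr (by omega)
  have step2 : ∑ b : {i // i ∉ A} → Fin 2, Complex.normSq (T (wgt b))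
      = ∑ w ∈ Finset.range R,
          (((Finset.univ.filter fun b : {i // i ∉ A} → Fin 2 => wgt b = w).card : ℝ)
            * Complex.normSq (T w)) := by
    rw [← Finset.sum_fiberwise_of_maps_to hmap (fun b => Complex.normSq (T (wgt b)))]
    refine Finset.sum_congr rfl fun w _ => ?_
    calc ∑ b ∈ Finset.univ.filter (fun b : {i // i ∉ A} → Fin 2 => wgt b = w),
          Complex.normSq (T (wgt b))
        = ∑ _b ∈ Finset.univ.filter (fun b : {i // i ∉ A} → Fin 2 => wgt b = w),
            Complex.normSq (T w) :=
          Finset.sum_congr rfl (fun b hb => by rw [(Finset.mem_filter.mp hb).2])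
      _ = _ := by rw [Finset.sum_const, nsmul_eq_mul]
  rw [step2]
  -- per-w bound
  have hbw : ∀ w ∈ Finset.range R,
      (((Finset.univ.filter fun b : {i // i ∉ A} → Fin 2 => wgt b = w).card : ℝ)
        * Complex.normSq (T w)) ≤ (vnum M j : ℝ) * Sg w := by
    intro w _
    have hCS : Complex.normSq (T w) ≤
        ((Finset.univ.filter fun a : {i // i ∈ A} → Fin 2 => wgt a + w = j).card : ℝ)
          * Sg w := by
      have := normSq_sum_le
        (Finset.univ.filter fun a : {i // i ∈ A} → Fin 2 => wgt a + w = j)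
        (fun a => star (v a))
      have hstar : ∀ a, Complex.normSq (star (v a)) = Complex.normSq (v a) := fun a =>
        Complex.normSq_conj (v a)
      simpa [hstar, hT, hSg] using this
    have hnat : (Finset.univ.filter fun a : {i // i ∈ A} → Fin 2 => wgt a + w = j).card
        * (Finset.univ.filter fun b : {i // i ∉ A} → Fin 2 => wgt b = w).card
        ≤ vnum M j := by
      have hcntB : (Finset.univ.filter fun b : {i // i ∉ A} → Fin 2 => wgt b = w).card
          = (M - A.card).choose w := by rw [card_wgt, hcardB]
      by_cases hwj : w ≤ j
      · have hcntA : (Finset.univ.filter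
            fun a : {i // i ∈ A} → Fin 2 => wgt a + w = j).card
            = (A.card).choose (j - w) := by
          rw [Finset.filter_congr (fun a _ => by
            constructor
            · intro h; omega
            · intro h; omega : ∀ a ∈ Finset.univ, (wgt a + w = j ↔ wgt a = j - w))]
          rw [card_wgt, hcardA]
        rw [hcntA, hcntB]
        exact keyB h3 hj hm1 hm2 (j - w) w (by omega)
      · have : (Finset.univ.filter
            fun a : {i // i ∈ A} → Fin 2 => wgt a + w = j).card = 0 := by
          rw [Finset.card_eq_zero, Finset.filter_eq_empty_iff]
          intro a _
          omega
        rw [this]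
        simp
    have hSnn : 0 ≤ Sg w := Finset.sum_nonneg fun a _ => Complex.normSq_nonneg _
    calc (((Finset.univ.filter fun b : {i // i ∉ A} → Fin 2 => wgt b = w).card : ℝ)
          * Complex.normSq (T w))
        ≤ (((Finset.univ.filter fun b : {i // i ∉ A} → Fin 2 => wgt b = w).card : ℝ)
          * ((((Finset.univ.filter
              fun a : {i // i ∈ A} → Fin 2 => wgt a + w = j).card : ℝ)) * Sg w)) := by
          apply mul_le_mul_of_nonneg_left hCS (Nat.cast_nonneg _)
      _ = ((((Finset.univ.filter
            fun a : {i // i ∈ A} → Fin 2 => wgt a + w = j).card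
            * (Finset.univ.filter fun b : {i // i ∉ A} → Fin 2 => wgt b = w).card : ℕ) : ℝ))
            * Sg w := by push_cast; ring
      _ ≤ (vnum M j : ℝ) * Sg w := by
          apply mul_le_mul_of_nonneg_right _ hSnn
          exact_mod_cast hnat
  have hSsum : ∑ w ∈ Finset.range R, Sg w ≤ 1 := by
    have expand : ∀ w, Sg w = ∑ a : {i // i ∈ A} → Fin 2,
        (if wgt a + w = j then Complex.normSq (v a) else 0) := fun w =>
      Finset.sum_filter _ _
    calc ∑ w ∈ Finset.range R, Sg w
        = ∑ a : {i // i ∈ A} → Fin 2, ∑ w ∈ Finset.range R,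
            (if wgt a + w = j then Complex.normSq (v a) else 0) := by
          rw [← Finset.sum_comm]
          exact Finset.sum_congr rfl fun w _ => expand w
      _ ≤ ∑ a : {i // i ∈ A} → Fin 2, Complex.normSq (v a) := by
          refine Finset.sum_le_sum fun a _ => ?_
          by_cases ha : wgt a ≤ j
          · have hiff : ∀ w, (wgt a + w = j) = (w = j - wgt a) := fun w => by
              apply propext; omega
            simp only [hiff]
            rw [Finset.sum_ite_eq' (Finset.range R) (j - wgt a)
              (fun _ => Complex.normSq (v a))]
            split
            · exact le_refl _
            · exact Complex.normSq_nonneg _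
          · rw [Finset.sum_eq_zero (fun w _ => if_neg (by omega))]
            exact Complex.normSq_nonneg _
      _ = 1 := hv
  calc (cr*cr) * ∑ w ∈ Finset.range R,
        (((Finset.univ.filter fun b : {i // i ∉ A} → Fin 2 => wgt b = w).card : ℝ)
          * Complex.normSq (T w))
      ≤ (cr*cr) * ((vnum M j : ℝ) * 1) := by
        apply mul_le_mul_of_nonneg_left _ (mul_self_nonneg cr)
        calc ∑ w ∈ Finset.range R,
            (((Finset.univ.filter fun b : {i // i ∉ A} → Fin 2 => wgt b = w).card : ℝ)
              * Complex.normSq (T w))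
            ≤ ∑ w ∈ Finset.range R, (vnum M j : ℝ) * Sg w := Finset.sum_le_sum hbw
          _ = (vnum M j : ℝ) * ∑ w ∈ Finset.range R, Sg w := by rw [Finset.mul_sum]
          _ ≤ (vnum M j : ℝ) * 1 := by
              apply mul_le_mul_of_nonneg_left hSsum (Nat.cast_nonneg _)
    _ = (vnum M j : ℝ) / (M.choose j : ℝ) := by
        rw [hcr, cr_sq (by omega : j ≤ M)]
        ring


lemma rayleigh_dicke_attain {M j : ℕ} (hM : Fintype.card ι = M) (hjM : j ≤ M)
    (A : Finset ι) (l0 : ℕ) (hl0 : l0 ≤ j) (hn0 : (A.card).choose l0 ≠ 0) :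
    ∃ v : ({i // i ∈ A} → Fin 2) → ℂ, (∑ a, Complex.normSq (v a) = 1) ∧
      (∑ a, ∑ a', star (v a) * rdm (dicke j) A a a' * v a').re
        = (((A.card).choose l0 : ℝ) * (((M - A.card).choose (j - l0)) : ℝ))
            / (M.choose j : ℝ) := by
  have hcardA : Fintype.card {i // i ∈ A} = A.card := Fintype.card_coe A
  have hcardB : Fintype.card {i // i ∉ A} = M - A.card := by
    rw [Fintype.card_subtype_compl, hM, hcardA]
  set n0 : ℕ := (A.card).choose l0 with hn0def
  have hfA : (Finset.univ.filter fun a : {i // i ∈ A} → Fin 2 => wgt a = l0).card = n0 := by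
    rw [card_wgt, hcardA]
  have hn0pos : (0:ℝ) < (n0 : ℝ) := by
    exact_mod_cast Nat.pos_of_ne_zero hn0
  set u : ℝ := (Real.sqrt (n0 : ℝ))⁻¹ with hu
  have hsqrtpos : (0:ℝ) < Real.sqrt (n0:ℝ) := Real.sqrt_pos.mpr hn0pos
  have huu : u * u = 1 / (n0 : ℝ) := by
    rw [hu, ← mul_inv, Real.mul_self_sqrt hn0pos.le, one_div]
  refine ⟨fun a => if wgt a = l0 then ((u : ℝ) : ℂ) else 0, ?_, ?_⟩
  · calc ∑ a, Complex.normSq (if wgt a = l0 then ((u : ℝ) : ℂ) else 0)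
        = ∑ a : {i // i ∈ A} → Fin 2, (if wgt a = l0 then u * u else 0) := by
          refine Finset.sum_congr rfl fun a _ => ?_
          split <;> simp [Complex.normSq_ofReal]
      _ = ∑ _a ∈ Finset.univ.filter (fun a : {i // i ∈ A} → Fin 2 => wgt a = l0), (u*u) :=
          (Finset.sum_filter _ _).symm
      _ = (n0 : ℝ) * (u * u) := by rw [Finset.sum_const, nsmul_eq_mul, hfA]
      _ = 1 := by rw [huu]; field_simp
  · rw [rayleigh]
    set v : ({i // i ∈ A} → Fin 2) → ℂ := fun a => if wgt a = l0 then ((u : ℝ) : ℂ) else 0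
      with hvdef
    have hnormTv : ∀ w : ℕ, Complex.normSq
        (∑ a ∈ Finset.univ.filter (fun a : {i // i ∈ A} → Fin 2 => wgt a + w = j),
          star (v a)) = if l0 + w = j then (n0 : ℝ) else 0 := by
      intro w
      have hTval :
          (∑ a ∈ Finset.univ.filter (fun a : {i // i ∈ A} → Fin 2 => wgt a + w = j),
            star (v a)) = if l0 + w = j then (((n0 : ℝ) * u : ℝ) : ℂ) else 0 := by
        by_cases hw : l0 + w = j
        · rw [if_pos hw]
          have hfilter : (Finset.univ.filter
                fun a : {i // i ∈ A} → Fin 2 => wgt a + w = j)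
              = Finset.univ.filter fun a : {i // i ∈ A} → Fin 2 => wgt a = l0 :=
            Finset.filter_congr (fun a _ => by constructor <;> (intro h; omega))
          rw [hfilter]
          calc ∑ a ∈ Finset.univ.filter (fun a : {i // i ∈ A} → Fin 2 => wgt a = l0),
                star (v a)
              = ∑ _a ∈ Finset.univ.filter (fun a : {i // i ∈ A} → Fin 2 => wgt a = l0),
                  ((u:ℝ):ℂ) := by
                refine Finset.sum_congr rfl fun a ha => ?_
                have hax : wgt a = l0 := (Finset.mem_filter.mp ha).2
                simp [hvdef, hax]
            _ = (n0 : ℕ) • ((u:ℝ):ℂ) := by rw [Finset.sum_const, hfA]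
            _ = (((n0 : ℝ) * u : ℝ) : ℂ) := by push_cast [nsmul_eq_mul]; ring
        · rw [if_neg hw]
          apply Finset.sum_eq_zero
          intro a ha
          have h1 : wgt a + w = j := (Finset.mem_filter.mp ha).2
          have h2 : wgt a ≠ l0 := by omega
          simp [hvdef, h2]
      rw [hTval]
      by_cases hw : l0 + w = j
      · rw [if_pos hw, if_pos hw, Complex.normSq_ofReal]
        calc (n0:ℝ) * u * ((n0:ℝ) * u) = (n0:ℝ) * (n0:ℝ) * (u * u) := by ring
          _ = (n0:ℝ) := by rw [huu]; field_simp
      · rw [if_neg hw, if_neg hw, Complex.normSq_zero]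
    have hcnt : (Finset.univ.filter
          fun b : {i // i ∉ A} → Fin 2 => l0 + wgt b = j).card
        = (M - A.card).choose (j - l0) := by
      rw [Finset.filter_congr (fun b _ => by
        constructor <;> (intro h; omega) : ∀ b ∈ Finset.univ,
          (l0 + wgt b = j ↔ wgt b = j - l0))]
      rw [card_wgt, hcardB]
    calc ∑ b : {i // i ∉ A} → Fin 2,
          Complex.normSq (∑ a, star (v a) * dicke j (merge A a b))
        = ∑ b : {i // i ∉ A} → Fin 2,
            (1/(M.choose j : ℝ)) * (if l0 + wgt b = j then (n0 : ℝ) else 0) := by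
          refine Finset.sum_congr rfl fun b _ => ?_
          rw [amp A v b, Complex.normSq_mul, Complex.normSq_ofReal, hM,
            cr_sq hjM, hnormTv (wgt b)]
      _ = (1/(M.choose j : ℝ)) * ∑ b : {i // i ∉ A} → Fin 2,
            (if l0 + wgt b = j then (n0 : ℝ) else 0) := by rw [Finset.mul_sum]
      _ = (1/(M.choose j : ℝ)) * (((M - A.card).choose (j - l0) : ℝ) * (n0 : ℝ)) := by
          rw [← Finset.sum_filter, Finset.sum_const, nsmul_eq_mul, hcnt]
      _ = (((A.card).choose l0 : ℝ) * (((M - A.card).choose (j - l0)) : ℝ))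
            / (M.choose j : ℝ) := by rw [← hn0def]; ring


lemma exists_normalized (κ : Type) [Fintype κ] [DecidableEq κ] [Nonempty κ] :
    ∃ v : κ → ℂ, ∑ i, Complex.normSq (v i) = 1 := by
  refine ⟨fun i => if i = Classical.arbitrary κ then 1 else 0, ?_⟩
  rw [Finset.sum_congr rfl (fun i _ => by
    rw [apply_ite Complex.normSq, Complex.normSq_one, Complex.normSq_zero])]
  rw [Finset.sum_ite_eq' Finset.univ (Classical.arbitrary κ) (fun _ => (1:ℝ))]
  simp

instance normalized_nonempty (κ : Type) [Fintype κ] [DecidableEq κ] [Nonempty κ] :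
    Nonempty {v : κ → ℂ // ∑ i, Complex.normSq (v i) = 1} := by
  obtain ⟨v, hv⟩ := exists_normalized κ
  exact ⟨⟨v, hv⟩⟩

lemma maxEig_le_of {κ : Type} [Fintype κ] [DecidableEq κ] [Nonempty κ] {ρ : κ → κ → ℂ}
    {V : ℝ}
    (h : ∀ v : κ → ℂ, (∑ i, Complex.normSq (v i) = 1) →
      (∑ i, ∑ j, star (v i) * ρ i j * v j).re ≤ V) :
    maxEig ρ ≤ V :=
  ciSup_le (fun v => h v.1 v.2)

lemma le_maxEig_of {κ : Type} [Fintype κ] [DecidableEq κ] [Nonempty κ] {ρ : κ → κ → ℂ}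
    {V B : ℝ}
    (hb : ∀ v : κ → ℂ, (∑ i, Complex.normSq (v i) = 1) →
      (∑ i, ∑ j, star (v i) * ρ i j * v j).re ≤ B)
    (v0 : κ → ℂ) (hv0 : ∑ i, Complex.normSq (v0 i) = 1)
    (hval : (∑ i, ∑ j, star (v0 i) * ρ i j * v0 j).re = V) :
    V ≤ maxEig ρ := by
  have hbdd : BddAbove (Set.range fun v : {v : κ → ℂ // ∑ i, Complex.normSq (v i) = 1} =>
      (∑ i, ∑ j, star (v.1 i) * ρ i j * v.1 j).re) := by
    refine ⟨B, ?_⟩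
    rintro x ⟨v, rfl⟩
    exact hb v.1 v.2
  have := le_ciSup hbdd ⟨v0, hv0⟩
  rw [hval] at this
  exact this

lemma ggm_dicke {M j : ℕ} (hM : Fintype.card ι = M) (h3 : 3 ≤ M) (hj : 2*j ≤ M+1) :
    GGM (dicke j : PureState ι) = 1 - (vnum M j : ℝ) / (M.choose j : ℝ) := by
  have hjM : j ≤ M := by omega
  have hne : Nonempty ι := by
    rw [← Fintype.card_pos_iff, hM]; omega
  obtain ⟨i0⟩ := hne
  have hsingle_ne : ({i0} : Finset ι) ≠ Finset.univ := by
    intro h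
    have := Finset.card_univ (α := ι)
    rw [← h, Finset.card_singleton, hM] at this
    omega
  have hAne : ∀ (A : Finset ι), A.Nonempty → Nonempty ({i // i ∈ A} → Fin 2) :=
    fun A _ => ⟨fun _ => 0⟩
  unfold GGM
  congr 1
  have hupper : ∀ A : {A : Finset ι // A.Nonempty ∧ A ≠ Finset.univ},
      maxEig (rdm (dicke j) A.1) ≤ (vnum M j : ℝ) / (M.choose j : ℝ) := by
    rintro ⟨A, hA1, hA2⟩
    have := hAne A hA1
    exact maxEig_le_of (fun v hv => rayleigh_dicke_le hM h3 hj A hA1 hA2 v hv)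
  have hbddrange : BddAbove (Set.range fun A : {A : Finset ι // A.Nonempty ∧
      A ≠ Finset.univ} => maxEig (rdm (dicke j) A.1)) :=
    Set.Finite.bddAbove (Set.finite_range _)
  have hidxne : Nonempty {A : Finset ι // A.Nonempty ∧ A ≠ Finset.univ} :=
    ⟨⟨{i0}, Finset.singleton_nonempty i0, hsingle_ne⟩⟩
  apply le_antisymm
  · exact ciSup_le hupper
  · -- attainment: pick A and l0 according to the case
    have attain : ∃ A : Finset ι, ∃ hA1 : A.Nonempty, ∃ hA2 : A ≠ Finset.univ,
        (vnum M j : ℝ) / (M.choose j : ℝ) ≤ maxEig (rdm (dicke j) A) := by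
      by_cases h1 : 2*j = M
      · -- two-element set, l0 = 1
        obtain ⟨i1, i2, hne12⟩ := Fintype.exists_pair_of_one_lt_card (by omega : 1 < Fintype.card ι)
        have hA2' : ({i1, i2} : Finset ι) ≠ Finset.univ := by
          intro h
          have := Finset.card_univ (α := ι)
          rw [← h, Finset.card_insert_of_notMem (by simp [hne12]),
            Finset.card_singleton, hM] at this
          omega
        refine ⟨{i1, i2}, ⟨i1, by simp⟩, hA2', ?_⟩
        · have hcard2 : ({i1, i2} : Finset ι).card = 2 := by
            rw [Finset.card_insert_of_notMem (by simp [hne12]), Finset.card_singleton]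
          have := hAne {i1, i2} ⟨i1, by simp⟩
          obtain ⟨v0, hv0, hval⟩ := rayleigh_dicke_attain hM hjM {i1, i2} 1
            (by omega) (by rw [hcard2]; simp)
          have hvnum : (vnum M j : ℝ) = ((({i1, i2} : Finset ι).card).choose 1 : ℝ)
              * (((M - ({i1, i2} : Finset ι).card).choose (j - 1)) : ℝ) := by
            rw [hcard2]
            unfold vnum
            rw [if_pos h1]
            push_cast
            norm_num
          rw [hvnum]
          exact le_maxEig_of (fun v hv => rayleigh_dicke_le hM h3 hj {i1, i2}
            ⟨i1, by simp⟩ hA2' v hv) v0 hv0 (by rw [hval])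
      · by_cases h2 : 2*j = M+1
        · -- singleton, l0 = 1
          refine ⟨{i0}, Finset.singleton_nonempty i0, hsingle_ne, ?_⟩
          have := hAne {i0} (Finset.singleton_nonempty i0)
          obtain ⟨v0, hv0, hval⟩ := rayleigh_dicke_attain hM hjM {i0} 1
            (by omega) (by rw [Finset.card_singleton]; simp)
          have hvnum : (vnum M j : ℝ) = ((({i0} : Finset ι).card).choose 1 : ℝ)
              * (((M - ({i0} : Finset ι).card).choose (j - 1)) : ℝ) := by
            rw [Finset.card_singleton]
            unfold vnum
            rw [if_neg h1, if_pos h2]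
            push_cast
            norm_num
          rw [hvnum]
          exact le_maxEig_of (fun v hv => rayleigh_dicke_le hM h3 hj {i0}
            (Finset.singleton_nonempty i0) hsingle_ne v hv) v0 hv0 (by rw [hval])
        · -- singleton, l0 = 0
          refine ⟨{i0}, Finset.singleton_nonempty i0, hsingle_ne, ?_⟩
          have := hAne {i0} (Finset.singleton_nonempty i0)
          obtain ⟨v0, hv0, hval⟩ := rayleigh_dicke_attain hM hjM {i0} 0
            (by omega) (by rw [Finset.card_singleton]; simp)
          have hvnum : (vnum M j : ℝ) = ((({i0} : Finset ι).card).choose 0 : ℝ)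
              * (((M - ({i0} : Finset ι).card).choose (j - 0)) : ℝ) := by
            rw [Finset.card_singleton]
            unfold vnum
            rw [if_neg h1, if_neg h2]
            push_cast
            norm_num
          rw [hvnum]
          exact le_maxEig_of (fun v hv => rayleigh_dicke_le hM h3 hj {i0}
            (Finset.singleton_nonempty i0) hsingle_ne v hv) v0 hv0 (by rw [hval])
    obtain ⟨A, hA1, hA2, hle⟩ := attain
    exact hle.trans (le_ciSup hbddrange ⟨A, hA1, hA2⟩)


lemma nat_id1 {M j : ℕ} (hj : j ≤ M) (hM : 1 ≤ M) :
    M * ((M-1).choose j) = (M - j) * (M.choose j) := by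
  rcases Nat.eq_or_lt_of_le hj with rfl | hlt
  · rw [Nat.choose_eq_zero_of_lt (by omega : j - 1 < j)]
    simp
  · obtain ⟨M1, rfl⟩ : ∃ M1, M = M1 + 1 := ⟨M-1, by omega⟩
    have hjM1 : j ≤ M1 := by omega
    have e1 := Nat.add_one_mul_choose_eq M1 (M1 - j)
    have e2 : M1.choose (M1 - j) = M1.choose j := Nat.choose_symm hjM1
    have e3 : (M1+1).choose (M1 - j + 1) = (M1+1).choose j := by
      have := Nat.choose_symm (n := M1+1) (k := j) (by omega)
      rw [show M1 + 1 - j = M1 - j + 1 by omega] at this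
      exact this
    rw [e2, e3] at e1
    rw [show M1 + 1 - 1 = M1 by omega, show M1 + 1 - j = M1 - j + 1 by omega,
      Nat.mul_comm (M1 - j + 1) ((M1+1).choose j)]
    exact e1

lemma nat_id2 {M j : ℕ} (hj1 : 1 ≤ j) (hj : j ≤ M) :
    j * (M.choose j) = M * ((M-1).choose (j-1)) := by
  obtain ⟨M1, rfl⟩ : ∃ M1, M = M1 + 1 := ⟨M-1, by omega⟩
  obtain ⟨j1, rfl⟩ : ∃ j1, j = j1 + 1 := ⟨j-1, by omega⟩
  have e := Nat.add_one_mul_choose_eq M1 j1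
  simp only [show M1 + 1 - 1 = M1 by omega, show j1 + 1 - 1 = j1 by omega]
  rw [Nat.mul_comm (j1+1) ((M1+1).choose (j1+1))]
  exact e.symm

lemma choose_ratio1 {N k : ℕ} (hk : k ≤ N) (hN : 0 < N) :
    ((N-1).choose k : ℝ) / (N.choose k : ℝ) = ((N:ℝ)-(k:ℝ))/(N:ℝ) := by
  have hC : (0:ℝ) < (N.choose k : ℝ) := by exact_mod_cast Nat.choose_pos hk
  have hid := nat_id1 hk hN
  have hidr : (N:ℝ) * ((N-1).choose k : ℝ) = ((N:ℝ)-(k:ℝ)) * (N.choose k : ℝ) := by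
    have : ((N * ((N-1).choose k) : ℕ) : ℝ) = (((N - k) * (N.choose k) : ℕ) : ℝ) := by
      exact_mod_cast hid
    push_cast [Nat.cast_sub hk] at this
    linarith
  rw [div_eq_div_iff hC.ne' (by exact_mod_cast hN.ne' : (N:ℝ) ≠ 0)]
  linarith

lemma choose_ratio2 {N k : ℕ} (hk1 : 1 ≤ k) (hk : k ≤ N) :
    ((N-1).choose (k-1) : ℝ) / (N.choose k : ℝ) = (k:ℝ)/(N:ℝ) := by
  have hN : 0 < N := by omega
  have hC : (0:ℝ) < (N.choose k : ℝ) := by exact_mod_cast Nat.choose_pos hk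
  have hid := nat_id2 hk1 hk
  have hidr : (k:ℝ) * (N.choose k : ℝ) = (N:ℝ) * ((N-1).choose (k-1) : ℝ) := by
    exact_mod_cast hid
  rw [div_eq_div_iff hC.ne' (by exact_mod_cast hN.ne' : (N:ℝ) ≠ 0)]
  linarith

lemma ggm_val_lt {M j : ℕ} (h3 : 3 ≤ M) (hj : 2*j < M) :
    1 - (vnum M j : ℝ) / (M.choose j : ℝ) = (j:ℝ)/(M:ℝ) := by
  have hv : vnum M j = (M-1).choose j := by
    unfold vnum
    rw [if_neg (by omega), if_neg (by omega)]
  rw [hv, choose_ratio1 (by omega) (by omega)]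
  have hM : (0:ℝ) < (M:ℝ) := by exact_mod_cast (by omega : 0 < M)
  field_simp
  ring

lemma ggm_val_succ {M j : ℕ} (h3 : 3 ≤ M) (hj : 2*j = M+1) :
    1 - (vnum M j : ℝ) / (M.choose j : ℝ) = ((M:ℝ)-(j:ℝ))/(M:ℝ) := by
  have hv : vnum M j = (M-1).choose (j-1) := by
    unfold vnum
    rw [if_neg (by omega), if_pos hj]
  rw [hv, choose_ratio2 (by omega) (by omega)]
  have hM : (0:ℝ) < (M:ℝ) := by exact_mod_cast (by omega : 0 < M)
  field_simp

lemma ggm_val_half {M j : ℕ} (h3 : 3 ≤ M) (hj : 2*j = M) :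
    1 - (vnum M j : ℝ) / (M.choose j : ℝ) = ((M:ℝ)-2)/(2*((M:ℝ)-1)) := by
  obtain ⟨j1, rfl⟩ : ∃ j1, j = j1 + 1 := ⟨j-1, by omega⟩
  have hMe : M = 2*j1+2 := by omega
  subst hMe
  have hv : vnum (2*j1+2) (j1+1) = 2*((2*j1).choose j1) := by
    unfold vnum
    rw [if_pos (by omega)]
    norm_num
  have hnat := choose_id j1
  have hC : (0:ℝ) < ((2*j1+2).choose (j1+1) : ℝ) := by
    exact_mod_cast Nat.choose_pos (by omega : j1+1 ≤ 2*j1+2)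
  have hid : ((2*j1+2).choose (j1+1) : ℝ) * (((j1:ℝ)+1)*((j1:ℝ)+1))
      = ((2*j1).choose j1 : ℝ) * ((2*(j1:ℝ)+2)*(2*(j1:ℝ)+1)) := by
    exact_mod_cast hnat
  rw [hv]
  push_cast
  have h1 : ((2*j1+2).choose (j1+1) : ℝ) ≠ 0 := hC.ne'
  have h2 : 2*((2*(j1:ℝ)+2)-1) ≠ 0 := by nlinarith [Nat.cast_nonneg (α := ℝ) j1]
  field_simp
  have hj0 : (0:ℝ) ≤ (j1:ℝ) := Nat.cast_nonneg _
  have h4 : ((2*j1+2).choose (j1+1) : ℝ) * ((j1:ℝ)+1)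
      = 2 * ((2*j1).choose j1 : ℝ) * (2*(j1:ℝ)+1) := by
    apply mul_right_cancel₀ (ne_of_gt (by linarith : (0:ℝ) < (j1:ℝ)+1))
    linear_combination hid
  rw [eq_div_iff (ne_of_gt (by linarith : (0:ℝ) < 2*((j1:ℝ)+1) - 1))]
  linear_combination h4


lemma collapse_up_eq (ψ : PureState ι) (r : ι) :
    collapse ψ r (xiUp 0 0) = fun b => ψ (fun i => if h : i = r then 0 else b ⟨i, h⟩) := by
  funext b
  unfold collapse
  rw [Fin.sum_univ_two]
  have h0 : xiUp 0 0 0 = 1 := by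
    simp [xiUp]
  have h1 : xiUp 0 0 1 = 0 := by
    simp [xiUp]
  rw [h0, h1]
  simp

lemma collapse_dn_eq (ψ : PureState ι) (r : ι) :
    collapse ψ r (xiDn 0 0) = fun b => ψ (fun i => if h : i = r then 1 else b ⟨i, h⟩) := by
  funext b
  unfold collapse
  rw [Fin.sum_univ_two]
  have h0 : xiDn 0 0 0 = 0 := by
    simp [xiDn]
  have h1 : xiDn 0 0 1 = 1 := by
    simp [xiDn]
  rw [h0, h1]
  simp

lemma nsq_ite {κ : Type} [Fintype κ] [DecidableEq κ] (t D : ℕ) (hD : 0 < D) :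
    nsq (fun b : κ → Fin 2 => if wgt b = t then ((1/Real.sqrt (D:ℝ) : ℝ):ℂ) else 0)
      = ((Fintype.card κ).choose t : ℝ) / (D : ℝ) := by
  have hDr : (0:ℝ) < (D:ℝ) := by exact_mod_cast hD
  unfold nsq
  calc ∑ b : κ → Fin 2,
        Complex.normSq (if wgt b = t then ((1/Real.sqrt (D:ℝ) : ℝ):ℂ) else 0)
      = ∑ b : κ → Fin 2, (if wgt b = t then (1/(D:ℝ)) else 0) := by
        refine Finset.sum_congr rfl fun b _ => ?_
        split
        · rw [Complex.normSq_ofReal, div_mul_div_comm, one_mul,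
            Real.mul_self_sqrt hDr.le]
        · exact Complex.normSq_zero
    _ = ∑ _b ∈ Finset.univ.filter (fun b : κ → Fin 2 => wgt b = t), (1/(D:ℝ)) :=
        (Finset.sum_filter _ _).symm
    _ = ((Fintype.card κ).choose t : ℝ) / (D : ℝ) := by
        rw [Finset.sum_const, nsmul_eq_mul, card_wgt]
        ring

lemma normalize_ite {κ : Type} [Fintype κ] [DecidableEq κ] (t D : ℕ) (hD : 0 < D)
    (ht : t ≤ Fintype.card κ) :
    normalize (fun b : κ → Fin 2 => if wgt b = t then ((1/Real.sqrt (D:ℝ) : ℝ):ℂ) else 0)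
      = (dicke t : PureState κ) := by
  have hDr : (0:ℝ) < (D:ℝ) := by exact_mod_cast hD
  have hCt : (0:ℝ) < (((Fintype.card κ).choose t : ℕ) : ℝ) := by
    exact_mod_cast Nat.choose_pos ht
  funext b
  unfold normalize
  rw [nsq_ite t D hD]
  have hs : Real.sqrt (((Fintype.card κ).choose t : ℝ) / (D:ℝ))
      = Real.sqrt ((Fintype.card κ).choose t : ℝ) / Real.sqrt (D:ℝ) :=
    Real.sqrt_div (by positivity) _
  have hsD : Real.sqrt (D:ℝ) ≠ 0 := by positivity
  have hsC : Real.sqrt (((Fintype.card κ).choose t : ℕ) : ℝ) ≠ 0 := by positivity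
  show (if wgt b = t then ((1/Real.sqrt (D:ℝ) : ℝ):ℂ) else 0)
      / ((Real.sqrt (((Fintype.card κ).choose t : ℝ) / (D:ℝ)) : ℝ) : ℂ) = dicke t b
  unfold dicke
  have hwgt : (∑ i, ((b i : ℕ))) = wgt b := rfl
  rw [hwgt]
  split
  · rw [← Complex.ofReal_div, hs]
    congr 1
    field_simp
  · rw [zero_div]

/-- For even `N > 2` and `1 ≤ k ≤ N/2`, measuring one qubit of `|D_k^N⟩`
in the computational basis gives an average post-measurement GGM equal to
`(N-2)/(2(N-1))` when `k = N/2` and `k/N` when `k < N/2`; in both cases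
this equals the GGM of the original Dicke state. -/
theorem stmt14 (N k : ℕ) (hN : 2 < N) (hNe : Even N) (hk1 : 1 ≤ k)
    (hk2 : 2 * k ≤ N) (r : Fin N) :
    avgGGM (dicke k : PureState (Fin N)) r 0 0 =
      (if 2 * k = N then ((N : ℝ) - 2) / (2 * ((N : ℝ) - 1))
        else (k : ℝ) / N) ∧
    avgGGM (dicke k : PureState (Fin N)) r 0 0 =
      GGM (dicke k : PureState (Fin N)) := by
  obtain ⟨t, ht⟩ := hNe
  have hN4 : 4 ≤ N := by omega
  have hcard : Fintype.card {i : Fin N // i ≠ r} = N - 1 := by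
    have h := Fintype.card_subtype_compl (fun i : Fin N => i = r)
    rw [Fintype.card_fin, Fintype.card_subtype_eq] at h
    exact h
  have hCNk : 0 < N.choose k := Nat.choose_pos (by omega)
  -- collapsed states
  have e_up : collapse (dicke k : PureState (Fin N)) r (xiUp 0 0)
      = fun b : {i : Fin N // i ≠ r} → Fin 2 =>
          if wgt b = k then ((1/Real.sqrt ((N.choose k : ℕ) : ℝ) : ℝ):ℂ) else 0 := by
    rw [collapse_up_eq]
    funext b
    show dicke k _ = _
    unfold dicke
    have hsum : (∑ i, (((if h : i = r then (0:Fin 2) else b ⟨i,h⟩) : Fin 2) : ℕ))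
        = wgt b := (wgt_ext r 0 b).trans (Nat.zero_add _)
    rw [hsum, Fintype.card_fin]
  have e_dn : collapse (dicke k : PureState (Fin N)) r (xiDn 0 0)
      = fun b : {i : Fin N // i ≠ r} → Fin 2 =>
          if wgt b = k - 1 then ((1/Real.sqrt ((N.choose k : ℕ) : ℝ) : ℝ):ℂ) else 0 := by
    rw [collapse_dn_eq]
    funext b
    show dicke k _ = _
    unfold dicke
    have hsum : (∑ i, (((if h : i = r then (1:Fin 2) else b ⟨i,h⟩) : Fin 2) : ℕ))
        = 1 + wgt b := wgt_ext r 1 b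
    rw [hsum, Fintype.card_fin]
    exact if_congr (by omega) rfl rfl
  -- numeric abbreviations
  have hn1 : ((N - 1 : ℕ) : ℝ) = (N:ℝ) - 1 := by
    push_cast [Nat.cast_sub (by omega : 1 ≤ N)]; ring
  have hk1' : ((k - 1 : ℕ) : ℝ) = (k:ℝ) - 1 := by
    push_cast [Nat.cast_sub hk1]; ring
  -- nsq values
  have nsq_up : nsq (collapse (dicke k : PureState (Fin N)) r (xiUp 0 0))
      = ((N:ℝ) - k)/(N:ℝ) := by
    rw [e_up, nsq_ite k (N.choose k) hCNk, hcard, choose_ratio1 (by omega) (by omega)]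
  have nsq_dn : nsq (collapse (dicke k : PureState (Fin N)) r (xiDn 0 0))
      = (k:ℝ)/(N:ℝ) := by
    rw [e_dn, nsq_ite (k-1) (N.choose k) hCNk, hcard,
      choose_ratio2 hk1 (by omega)]
  -- normalized states
  have norm_up : QI.normalize (collapse (dicke k : PureState (Fin N)) r (xiUp 0 0))
      = (dicke k : PureState {i : Fin N // i ≠ r}) := by
    rw [e_up]
    exact normalize_ite k (N.choose k) hCNk (by rw [hcard]; omega)
  have norm_dn : QI.normalize (collapse (dicke k : PureState (Fin N)) r (xiDn 0 0))
      = (dicke (k-1) : PureState {i : Fin N // i ≠ r}) := by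
    rw [e_dn]
    exact normalize_ite (k-1) (N.choose k) hCNk (by rw [hcard]; omega)
  -- GGM of post-measurement states
  have G_dn : GGM (dicke (k-1) : PureState {i : Fin N // i ≠ r})
      = ((k:ℝ)-1)/((N:ℝ)-1) := by
    rw [ggm_dicke hcard (by omega) (by omega),
      ggm_val_lt (by omega) (by omega), hn1, hk1']
  have G_orig : GGM (dicke k : PureState (Fin N))
      = (if 2 * k = N then ((N : ℝ) - 2) / (2 * ((N : ℝ) - 1)) else (k : ℝ) / N) := by
    rw [ggm_dicke (Fintype.card_fin N) (by omega) (by omega)]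
    by_cases h2k : 2*k = N
    · rw [if_pos h2k, ggm_val_half (by omega) h2k]
    · rw [if_neg h2k, ggm_val_lt (by omega) (by omega)]
  have havg : avgGGM (dicke k : PureState (Fin N)) r 0 0
      = (if 2 * k = N then ((N : ℝ) - 2) / (2 * ((N : ℝ) - 1)) else (k : ℝ) / N) := by
    unfold avgGGM
    rw [nsq_up, nsq_dn, norm_up, norm_dn, G_dn]
    have hnR : (4:ℝ) ≤ (N:ℝ) := by exact_mod_cast hN4
    have hkR : (1:ℝ) ≤ (k:ℝ) := by exact_mod_cast hk1
    have hkN : 2*(k:ℝ) ≤ (N:ℝ) := by exact_mod_cast hk2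
    by_cases h2k : 2*k = N
    · have G_up : GGM (dicke k : PureState {i : Fin N // i ≠ r})
          = ((N:ℝ) - 1 - k)/((N:ℝ)-1) := by
        rw [ggm_dicke hcard (by omega) (by omega),
          ggm_val_succ (by omega) (by omega), hn1]
      rw [G_up, if_pos h2k]
      rw [show (N:ℝ) = 2*(k:ℝ) from by exact_mod_cast h2k.symm]
      have d1 : (2*(k:ℝ)) ≠ 0 := by nlinarith
      have d2 : 2*(k:ℝ)-1 ≠ 0 := by nlinarith
      field_simp
      ring
    · have h2klt : 2*k < N - 1 := by omega
      have G_up : GGM (dicke k : PureState {i : Fin N // i ≠ r})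
          = (k:ℝ)/((N:ℝ)-1) := by
        rw [ggm_dicke hcard (by omega) (by omega),
          ggm_val_lt (by omega) h2klt, hn1]
      rw [G_up, if_neg h2k]
      have d1 : (N:ℝ) ≠ 0 := by nlinarith
      have d2 : (N:ℝ)-1 ≠ 0 := by nlinarith
      field_simp
      ring
  exact ⟨havg, havg.trans G_orig.symm⟩

end QI
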